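/- arXiv:2404.17812 — 4 statements merged into one kernel-verified Lean document; each statement's English description precedes it below -/
import Mathlib

section
/- Let K : ℝ → ℝ be integrable with Fourier transform φ_K supported in [−M₀, M₀] for some M₀ > 0. Let φ_ε : ℝ → ℂ be continuous and nowhere vanishing, and suppose there are constants d₀ > 0, β > 0, γ > 0, β₀ ∈ ℝ and M > 0 such that |φ_ε(t)| ≥ d₀ |t|^{β₀} exp(−|t|^β/γ) for all |t| ≥ M. For n ≥ 2 set h_n = c (log n)^{−1/β} with a constant c > M₀ (2/γ)^{1/β}. Then n⁻¹ · (sup_{x ∈ ℝ} |K_{h_n}(x)|)² → 0 as n → ∞. -/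
open MeasureTheory Filter

private lemma key_lim (q r : ℝ) (hr : r < 1) :
    Tendsto (fun n : ℕ => (n : ℝ)⁻¹ * Real.log n ^ q * Real.exp (r * Real.log n))
      atTop (nhds 0) := by
  have h1 : Tendsto (fun L : ℝ => L ^ q * Real.exp (-(1 - r) * L)) atTop (nhds 0) :=
    tendsto_rpow_mul_exp_neg_mul_atTop_nhds_zero q (1 - r) (by linarith)
  have h2 : Tendsto (fun n : ℕ => Real.log n) atTop atTop :=
    Real.tendsto_log_atTop.comp tendsto_natCast_atTop_atTop
  refine (h1.comp h2).congr' ?_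
  filter_upwards [eventually_ge_atTop 1] with n hn
  have hn0 : (0 : ℝ) < n := by exact_mod_cast hn
  have : Real.exp (-(1 - r) * Real.log n)
      = (n : ℝ)⁻¹ * Real.exp (r * Real.log n) := by
    rw [show -(1 - r) * Real.log n = r * Real.log n + -Real.log n by ring,
      Real.exp_add, Real.exp_neg, Real.exp_log hn0]
    ring
  simp only [Function.comp]
  rw [this]; ring

/-- Let `K` be integrable with Fourier transform `φ_K` supported in
`[−M₀, M₀]`, let `φ_ε` be continuous, nowhere vanishing, with
`|φ_ε(t)| ≥ d₀ |t|^{β₀} exp(−|t|^β/γ)` for `|t| ≥ M`. With bandwidth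
`h_n = c (log n)^{−1/β}`, `c > M₀ (2/γ)^{1/β}`, the deconvolution kernel
`K_h(x) = (2π)⁻¹ ∫ exp(−itx) φ_K(t)/φ_ε(t/h) dt` satisfies
`n⁻¹ (sup_x |K_{h_n}(x)|)² → 0`. -/
theorem stmt_3 (K : ℝ → ℝ) (hK : Integrable K)
    (φK : ℝ → ℂ) (hφK : ∀ t : ℝ, φK t = ∫ x : ℝ, Complex.exp (Complex.I * t * x) * K x)
    (M₀ : ℝ) (hM₀ : 0 < M₀) (hsupp : ∀ t : ℝ, M₀ < |t| → φK t = 0)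
    (φε : ℝ → ℂ) (hφεc : Continuous φε) (hφε0 : ∀ t, φε t ≠ 0)
    (d₀ β γ : ℝ) (hd₀ : 0 < d₀) (hβ : 0 < β) (hγ : 0 < γ) (β₀ M : ℝ) (hM : 0 < M)
    (hlow : ∀ t : ℝ, M ≤ |t| → d₀ * |t| ^ β₀ * Real.exp (-(|t| ^ β) / γ) ≤ ‖φε t‖)
    (c : ℝ) (hc : M₀ * (2 / γ) ^ (1 / β) < c)
    (h : ℕ → ℝ) (hh : ∀ n : ℕ, 2 ≤ n → h n = c * Real.log n ^ (-(1 / β)))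
    (Kh : ℕ → ℝ → ℂ)
    (hKh : ∀ (n : ℕ) (x : ℝ), Kh n x =
      ((2 * Real.pi : ℝ) : ℂ)⁻¹ *
        ∫ t : ℝ, Complex.exp (-(Complex.I * t * x)) * φK t / φε (t / h n)) :
    Tendsto (fun n : ℕ => (n : ℝ)⁻¹ * (⨆ x : ℝ, ‖Kh n x‖) ^ 2) atTop (nhds 0) := by
  -- basic positivity
  have hp : (0 : ℝ) < (2 / γ) ^ (1 / β) := Real.rpow_pos_of_pos (by positivity) _
  have hc0 : (0 : ℝ) < c := lt_trans (by positivity) hc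
  have hA0 : (0 : ℝ) < M₀ / c := by positivity
  -- the exponent constant
  have ha0 : (0 : ℝ) < (M₀ / c) ^ β := Real.rpow_pos_of_pos hA0 β
  have ha : (M₀ / c) ^ β < γ / 2 := by
    have hx : M₀ / c < ((2 / γ) ^ (1 / β))⁻¹ := by
      rw [div_lt_iff₀ hc0, inv_mul_eq_div, lt_div_iff₀ hp]
      exact hc
    have h2 : ((2 / γ) ^ (1 / β) : ℝ)⁻¹ ^ β = γ / 2 := by
      rw [Real.inv_rpow (le_of_lt hp), ← Real.rpow_mul (by positivity),
        one_div_mul_cancel (ne_of_gt hβ), Real.rpow_one, inv_div]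
    calc (M₀ / c) ^ β < (((2 / γ) ^ (1 / β) : ℝ)⁻¹) ^ β :=
          Real.rpow_lt_rpow hA0.le hx hβ
      _ = γ / 2 := h2
  set a : ℝ := (M₀ / c) ^ β with ha_def
  set r : ℝ := 2 * a / γ with hr_def
  have hr : r < 1 := by rw [hr_def, div_lt_one hγ]; linarith
  set q : ℝ := -(2 * β₀) / β with hq_def
  -- norm of unimodular exponentials
  have hexpnorm : ∀ z : ℂ, z.re = 0 → ‖Complex.exp z‖ = 1 := fun z hz => by
    rw [Complex.norm_exp, hz, Real.exp_zero]
  -- C₀ bound on φK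
  set C₀ : ℝ := ∫ x : ℝ, ‖K x‖ with hC₀_def
  have hC₀0 : 0 ≤ C₀ := integral_nonneg fun x => norm_nonneg _
  have hφKb : ∀ t : ℝ, ‖φK t‖ ≤ C₀ := by
    intro t
    rw [hφK]
    refine le_trans (norm_integral_le_integral_norm _) (le_of_eq ?_)
    refine integral_congr_ae (Eventually.of_forall fun x => ?_)
    simp only
    rw [norm_mul, hexpnorm _ (by simp), one_mul, Complex.norm_real]
  -- minimum of ‖φε‖ on the compact set Icc (-M) M
  obtain ⟨s₀, -, hmin⟩ := (isCompact_Icc (a := -M) (b := M)).exists_isMinOn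
    ⟨M, by constructor <;> [linarith; linarith]⟩ (hφεc.norm.continuousOn)
  have hmle : ∀ s ∈ Set.Icc (-M) M, ‖φε s₀‖ ≤ ‖φε s‖ := fun s hs => hmin hs
  set m : ℝ := ‖φε s₀‖ with hm_def
  have hm : 0 < m := norm_pos_iff.2 (hφε0 s₀)
  -- the auxiliary functions
  set T : ℕ → ℝ := fun n => (M₀ / c) * Real.log n ^ (1 / β) with hT_def
  set Q : ℕ → ℝ := fun n => min (M ^ β₀) (T n ^ β₀) with hQ_def
  set E : ℕ → ℝ := fun n => d₀ * Q n * Real.exp (-(T n ^ β) / γ) with hE_def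
  set D : ℕ → ℝ := fun n => min m (E n) with hD_def
  set C₂ : ℝ := ((2 * Real.pi)⁻¹ * (2 * M₀ * C₀)) ^ 2 with hC₂_def
  set S : ℕ → ℝ := fun n => C₂ * ((m⁻¹) ^ 2 * (n : ℝ)⁻¹
      + (d₀⁻¹) ^ 2 * M ^ (-(2 * β₀)) * ((n : ℝ)⁻¹ * Real.exp (r * Real.log n))
      + (d₀⁻¹) ^ 2 * (M₀ / c) ^ (-(2 * β₀))
          * ((n : ℝ)⁻¹ * Real.log n ^ q * Real.exp (r * Real.log n))) with hS_def
  -- the majorant tends to zero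
  have k0 : Tendsto (fun n : ℕ => (n : ℝ)⁻¹) atTop (nhds 0) :=
    tendsto_inv_atTop_zero.comp tendsto_natCast_atTop_atTop
  have k1 : Tendsto (fun n : ℕ => (n : ℝ)⁻¹ * Real.exp (r * Real.log n)) atTop (nhds 0) := by
    have := key_lim 0 r hr
    simpa [Real.rpow_zero] using this
  have k2 := key_lim q r hr
  have hS : Tendsto S atTop (nhds 0) := by
    have := ((((k0.const_mul ((m⁻¹) ^ 2)).add
        (k1.const_mul ((d₀⁻¹) ^ 2 * M ^ (-(2 * β₀))))).add
        ((k2.const_mul ((d₀⁻¹) ^ 2 * (M₀ / c) ^ (-(2 * β₀)))))).const_mul C₂)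
    simp only [mul_zero, add_zero, zero_add] at this
    refine this.congr fun n => ?_
    simp only [hS_def]
    try ring
  refine tendsto_of_tendsto_of_tendsto_of_le_of_le' tendsto_const_nhds hS
    (Eventually.of_forall fun n => by positivity) ?_
  -- eventual upper bound
  have hlog := Real.tendsto_log_atTop.comp tendsto_natCast_atTop_atTop
  filter_upwards [eventually_ge_atTop 2,
    hlog.eventually_ge_atTop (max 1 ((M * c / M₀) ^ β))] with n hn2 hnL
  simp only [Function.comp] at hnL
  have hL1 : (1 : ℝ) ≤ Real.log n := le_trans (le_max_left _ _) hnL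
  have hLM : (M * c / M₀) ^ β ≤ Real.log n := le_trans (le_max_right _ _) hnL
  have hL0 : (0 : ℝ) < Real.log n := lt_of_lt_of_le one_pos hL1
  set L : ℝ := Real.log n with hL_def
  have hLβpos : (0 : ℝ) < L ^ (1 / β) := Real.rpow_pos_of_pos hL0 _
  have hTpos : 0 < T n := by rw [hT_def]; positivity
  have hTM : M ≤ T n := by
    have e : ((M * c / M₀) ^ β) ^ (1 / β) = M * c / M₀ := by
      rw [← Real.rpow_mul (by positivity), mul_one_div, div_self (ne_of_gt hβ), Real.rpow_one]
    have h1 : M * c / M₀ ≤ L ^ (1 / β) := by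
      calc M * c / M₀ = ((M * c / M₀) ^ β) ^ (1 / β) := e.symm
        _ ≤ L ^ (1 / β) := Real.rpow_le_rpow (Real.rpow_nonneg (by positivity) _) hLM
            (by positivity)
    have : M₀ / c * (M * c / M₀) ≤ M₀ / c * L ^ (1 / β) :=
      mul_le_mul_of_nonneg_left h1 hA0.le
    calc M = M₀ / c * (M * c / M₀) := by field_simp
      _ ≤ T n := this
  have hTβ : T n ^ β = a * L := by
    rw [hT_def, ha_def]
    simp only
    rw [Real.mul_rpow hA0.le (Real.rpow_nonneg hL0.le _), ← Real.rpow_mul hL0.le,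
      one_div_mul_cancel (ne_of_gt hβ), Real.rpow_one]
  have hQpos : 0 < Q n :=
    lt_min (Real.rpow_pos_of_pos hM _) (Real.rpow_pos_of_pos hTpos _)
  have hEpos : 0 < E n := by
    rw [hE_def]; exact mul_pos (mul_pos hd₀ hQpos) (Real.exp_pos _)
  have hDpos : 0 < D n := lt_min hm hEpos
  -- bandwidth facts
  have hhn : h n = c * L ^ (-(1 / β)) := hh n hn2
  have hhpos : 0 < h n := by
    rw [hhn]; exact mul_pos hc0 (Real.rpow_pos_of_pos hL0 _)
  have hTdef : M₀ / h n = T n := by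
    rw [hhn, Real.rpow_neg hL0.le, hT_def]
    field_simp
    rfl
  -- lower bound on ‖φε s‖ for |s| ≤ T n
  have hAbd : ∀ s : ℝ, |s| ≤ T n → D n ≤ ‖φε s‖ := by
    intro s hs
    rcases le_or_gt |s| M with h1 | h1
    · exact le_trans (min_le_left _ _) (hmle s (Set.mem_Icc.2 (abs_le.1 h1)))
    · refine le_trans (min_le_right _ _) (le_trans ?_ (hlow s h1.le))
      have hs0 : 0 < |s| := lt_trans hM h1
      have hQle : Q n ≤ |s| ^ β₀ := by
        rcases le_or_gt 0 β₀ with hb | hb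
        · exact le_trans (min_le_left _ _) (Real.rpow_le_rpow hM.le h1.le hb)
        · exact le_trans (min_le_right _ _) (Real.rpow_le_rpow_of_nonpos hs0 hs hb.le)
      have hexp : Real.exp (-(T n ^ β) / γ) ≤ Real.exp (-(|s| ^ β) / γ) := by
        apply Real.exp_le_exp.2
        have : |s| ^ β ≤ T n ^ β := Real.rpow_le_rpow (abs_nonneg s) hs hβ.le
        rw [neg_div, neg_div, neg_le_neg_iff]
        exact (div_le_div_iff_of_pos_right hγ).2 this
      rw [hE_def]
      exact mul_le_mul (mul_le_mul le_rfl hQle hQpos.le hd₀.le) hexp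
        (Real.exp_nonneg _) (by positivity)
  -- integrable indicator majorant
  have hind : Integrable ((Set.Icc (-M₀) M₀).indicator fun _ : ℝ => C₀ / D n) := by
    refine (integrableOn_const ?_).integrable_indicator measurableSet_Icc
    rw [Real.volume_Icc]; exact ENNReal.ofReal_ne_top
  have hBnn : (0 : ℝ) ≤ (2 * Real.pi)⁻¹ * (2 * M₀ * (C₀ / D n)) := by positivity
  have hBx : ∀ x : ℝ, ‖Kh n x‖ ≤ (2 * Real.pi)⁻¹ * (2 * M₀ * (C₀ / D n)) := by
    intro x
    rw [hKh n x, norm_mul]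
    have hπ : ‖(((2 * Real.pi : ℝ)) : ℂ)⁻¹‖ = (2 * Real.pi)⁻¹ := by
      rw [norm_inv, Complex.norm_real, Real.norm_eq_abs,
        abs_of_nonneg (by positivity : (0 : ℝ) ≤ 2 * Real.pi)]
    rw [hπ]
    refine mul_le_mul_of_nonneg_left ?_ (by positivity)
    calc ‖∫ t : ℝ, Complex.exp (-(Complex.I * t * x)) * φK t / φε (t / h n)‖
        ≤ ∫ t : ℝ, ‖Complex.exp (-(Complex.I * t * x)) * φK t / φε (t / h n)‖ :=
          norm_integral_le_integral_norm _
      _ ≤ ∫ t : ℝ, (Set.Icc (-M₀) M₀).indicator (fun _ => C₀ / D n) t := by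
          refine integral_mono_of_nonneg (Eventually.of_forall fun t => norm_nonneg _) hind
            (Eventually.of_forall fun t => ?_)
          simp only
          by_cases ht : |t| ≤ M₀
          · rw [Set.indicator_of_mem (Set.mem_Icc.2 (abs_le.1 ht)), norm_div, norm_mul,
              hexpnorm _ (by simp), one_mul]
            refine div_le_div₀ hC₀0 (hφKb t) hDpos (hAbd _ ?_)
            rw [abs_div, abs_of_pos hhpos, ← hTdef]
            exact (div_le_div_iff_of_pos_right hhpos).2 ht
          · push_neg at ht
            rw [hsupp t ht]
            simp only [mul_zero, zero_div, norm_zero]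
            exact Set.indicator_nonneg (fun _ _ => div_nonneg hC₀0 hDpos.le) t
      _ = 2 * M₀ * (C₀ / D n) := by
          rw [integral_indicator_const _ measurableSet_Icc, measureReal_def, Real.volume_Icc, smul_eq_mul,
            ENNReal.toReal_ofReal (by linarith)]
          ring
  have hsup : (⨆ x : ℝ, ‖Kh n x‖) ≤ (2 * Real.pi)⁻¹ * (2 * M₀ * (C₀ / D n)) :=
    Real.iSup_le hBx hBnn
  have hsup0 : 0 ≤ ⨆ x : ℝ, ‖Kh n x‖ := Real.iSup_nonneg fun x => norm_nonneg _
  -- pieces of the majorant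
  have hDinv : ((D n)⁻¹) ^ 2 ≤ (m⁻¹) ^ 2 + ((E n)⁻¹) ^ 2 := by
    rcases le_total m (E n) with hme | hme
    · simp only [hD_def]; rw [min_eq_left hme]
      exact le_add_of_nonneg_right (by positivity)
    · simp only [hD_def]; rw [min_eq_right hme]
      exact le_add_of_nonneg_left (by positivity)
  have hE' : E n = d₀ * Q n * Real.exp (-(a * L) / γ) := by
    simp only [hE_def]; rw [hTβ]
  have hEinv : ((E n)⁻¹) ^ 2 = (d₀⁻¹) ^ 2 * ((Q n)⁻¹) ^ 2 * Real.exp (r * L) := by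
    calc ((E n)⁻¹) ^ 2
        = (d₀⁻¹) ^ 2 * ((Q n)⁻¹) ^ 2 * ((Real.exp (-(a * L) / γ))⁻¹) ^ 2 := by
          rw [hE']; ring
      _ = (d₀⁻¹) ^ 2 * ((Q n)⁻¹) ^ 2 * Real.exp (r * L) := by
          congr 1
          rw [show -(a * L) / γ = -(a * L / γ) by ring, Real.exp_neg, inv_inv, pow_two,
            ← Real.exp_add, hr_def]
          congr 1; ring
  have eM : ((M ^ β₀ : ℝ)⁻¹) ^ 2 = M ^ (-(2 * β₀)) := by
    rw [← Real.rpow_neg hM.le, pow_two, ← Real.rpow_add hM]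
    congr 1; ring
  have eT : ((T n ^ β₀ : ℝ)⁻¹) ^ 2 = (M₀ / c) ^ (-(2 * β₀)) * L ^ q := by
    simp only [hT_def]
    rw [Real.mul_rpow hA0.le (Real.rpow_nonneg hL0.le _), ← Real.rpow_mul hL0.le, mul_inv,
      mul_pow, ← Real.rpow_neg hA0.le, ← Real.rpow_neg hL0.le, pow_two, pow_two,
      ← Real.rpow_add hA0, ← Real.rpow_add hL0]
    congr 1
    · congr 1; ring
    · congr 1; rw [hq_def]; ring
  have eQ : ((Q n)⁻¹) ^ 2 ≤ M ^ (-(2 * β₀)) + (M₀ / c) ^ (-(2 * β₀)) * L ^ q := by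
    rcases le_total (M ^ β₀ : ℝ) (T n ^ β₀) with hm2 | hm2
    · simp only [hQ_def]; rw [min_eq_left hm2, eM]
      exact le_add_of_nonneg_right
        (mul_nonneg (Real.rpow_nonneg hA0.le _) (Real.rpow_nonneg hL0.le _))
    · simp only [hQ_def]; rw [min_eq_right hm2, eT]
      exact le_add_of_nonneg_left (Real.rpow_nonneg hM.le _)
  have hDS : (n : ℝ)⁻¹ * ((D n)⁻¹) ^ 2 ≤ (m⁻¹) ^ 2 * (n : ℝ)⁻¹
      + (d₀⁻¹) ^ 2 * M ^ (-(2 * β₀)) * ((n : ℝ)⁻¹ * Real.exp (r * L))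
      + (d₀⁻¹) ^ 2 * (M₀ / c) ^ (-(2 * β₀)) * ((n : ℝ)⁻¹ * L ^ q * Real.exp (r * L)) := by
    have h2 : ((E n)⁻¹) ^ 2 ≤ (d₀⁻¹) ^ 2 * (M ^ (-(2 * β₀)) + (M₀ / c) ^ (-(2 * β₀)) * L ^ q)
        * Real.exp (r * L) := by
      rw [hEinv]
      exact mul_le_mul_of_nonneg_right
        (mul_le_mul_of_nonneg_left eQ (by positivity)) (Real.exp_nonneg _)
    have h1 : ((D n)⁻¹) ^ 2 ≤ (m⁻¹) ^ 2
        + (d₀⁻¹) ^ 2 * (M ^ (-(2 * β₀)) + (M₀ / c) ^ (-(2 * β₀)) * L ^ q)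
          * Real.exp (r * L) := by linarith
    calc (n : ℝ)⁻¹ * ((D n)⁻¹) ^ 2
        ≤ (n : ℝ)⁻¹ * ((m⁻¹) ^ 2
          + (d₀⁻¹) ^ 2 * (M ^ (-(2 * β₀)) + (M₀ / c) ^ (-(2 * β₀)) * L ^ q)
            * Real.exp (r * L)) := mul_le_mul_of_nonneg_left h1 (by positivity)
      _ = _ := by ring
  calc (n : ℝ)⁻¹ * (⨆ x : ℝ, ‖Kh n x‖) ^ 2
      ≤ (n : ℝ)⁻¹ * ((2 * Real.pi)⁻¹ * (2 * M₀ * (C₀ / D n))) ^ 2 :=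
        mul_le_mul_of_nonneg_left (pow_le_pow_left₀ hsup0 hsup 2) (by positivity)
    _ = C₂ * ((n : ℝ)⁻¹ * ((D n)⁻¹) ^ 2) := by
        rw [hC₂_def, div_eq_mul_inv]; ring
    _ ≤ S n := by
        simp only [hS_def]
        rw [← hL_def]
        exact mul_le_mul_of_nonneg_left hDS (by positivity)
end

section
/- Let (X, Z) be real random variables with E[|Z|] < ∞, let ε be a real random variable independent of the pair (X, Z), let Y = X + ε, and let φ_ε(t) = E[exp(itε)] be nowhere vanishing. Let K : ℝ → ℝ be continuous and integrable with integrable Fourier transform φ_K, let h > 0, and assume t ↦ φ_K(th)/φ_ε(t) is integrable. Then for every x ∈ ℝ: (2π)⁻¹ ∫_ℝ exp(−itx) φ_K(th) E[Z exp(itY)]/φ_ε(t) dt = h⁻¹ E[Z K((x − X)/h)]. -/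
open MeasureTheory ProbabilityTheory


open MeasureTheory ProbabilityTheory Complex

lemma norm_exp_I_mul_ofReal (z : ℂ) (hz : z.re = 0) : ‖Complex.exp z‖ = 1 := by
  rw [Complex.norm_exp, hz, Real.exp_zero]

lemma aux_indep_integral_mul {Ω : Type*} [MeasureSpace Ω] [IsProbabilityMeasure (ℙ : Measure Ω)]
    {f g : Ω → ℂ} (hfg : IndepFun f g ℙ) (hf : Integrable f ℙ) (hg : Integrable g ℙ) :
    ∫ ω, f ω * g ω ∂ℙ = (∫ ω, f ω ∂ℙ) * ∫ ω, g ω ∂ℙ := by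
  have hfa : Integrable (fun ω => (f ω).re) ℙ := by simpa using hf.re
  have hfb : Integrable (fun ω => (f ω).im) ℙ := by simpa using hf.im
  have hgc : Integrable (fun ω => (g ω).re) ℙ := by simpa using hg.re
  have hgd : Integrable (fun ω => (g ω).im) ℙ := by simpa using hg.im
  have iac : IndepFun (fun ω => (f ω).re) (fun ω => (g ω).re) ℙ :=
    hfg.comp Complex.measurable_re Complex.measurable_re
  have iad : IndepFun (fun ω => (f ω).re) (fun ω => (g ω).im) ℙ :=
    hfg.comp Complex.measurable_re Complex.measurable_im
  have ibc : IndepFun (fun ω => (f ω).im) (fun ω => (g ω).re) ℙ :=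
    hfg.comp Complex.measurable_im Complex.measurable_re
  have ibd : IndepFun (fun ω => (f ω).im) (fun ω => (g ω).im) ℙ :=
    hfg.comp Complex.measurable_im Complex.measurable_im
  have hac : Integrable (fun ω => (f ω).re * (g ω).re) ℙ := iac.integrable_mul hfa hgc
  have hbd : Integrable (fun ω => (f ω).im * (g ω).im) ℙ := ibd.integrable_mul hfb hgd
  have had : Integrable (fun ω => (f ω).re * (g ω).im) ℙ := iad.integrable_mul hfa hgd
  have hbc : Integrable (fun ω => (f ω).im * (g ω).re) ℙ := ibc.integrable_mul hfb hgc
  have hmul : Integrable (fun ω => f ω * g ω) ℙ := by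
    have hn : Integrable (fun ω => ‖f ω‖ * ‖g ω‖) ℙ :=
      (hfg.comp measurable_norm measurable_norm).integrable_mul hf.norm hg.norm
    exact hn.mono' (hf.1.mul hg.1)
      (Filter.Eventually.of_forall fun ω => le_of_eq (norm_mul _ _))
  have hfre : (∫ ω, f ω ∂ℙ).re = ∫ ω, (f ω).re ∂ℙ := by simpa using (integral_re hf).symm
  have hfim : (∫ ω, f ω ∂ℙ).im = ∫ ω, (f ω).im ∂ℙ := by simpa using (integral_im hf).symm
  have hgre : (∫ ω, g ω ∂ℙ).re = ∫ ω, (g ω).re ∂ℙ := by simpa using (integral_re hg).symm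
  have hgim : (∫ ω, g ω ∂ℙ).im = ∫ ω, (g ω).im ∂ℙ := by simpa using (integral_im hg).symm
  have hmre : (∫ ω, f ω * g ω ∂ℙ).re = ∫ ω, (f ω * g ω).re ∂ℙ := by
    simpa using (integral_re hmul).symm
  have hmim : (∫ ω, f ω * g ω ∂ℙ).im = ∫ ω, (f ω * g ω).im ∂ℙ := by
    simpa using (integral_im hmul).symm
  apply Complex.ext
  · rw [hmre, Complex.mul_re, hfre, hfim, hgre, hgim]
    calc ∫ ω, (f ω * g ω).re ∂ℙ
        = ∫ ω, ((f ω).re * (g ω).re - (f ω).im * (g ω).im) ∂ℙ := by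
          simp_rw [Complex.mul_re]
      _ = (∫ ω, (f ω).re * (g ω).re ∂ℙ) - ∫ ω, (f ω).im * (g ω).im ∂ℙ :=
          integral_sub hac hbd
      _ = (∫ ω, (f ω).re ∂ℙ) * (∫ ω, (g ω).re ∂ℙ)
            - (∫ ω, (f ω).im ∂ℙ) * ∫ ω, (g ω).im ∂ℙ := by
          rw [iac.integral_fun_mul_eq_mul_integral hfa.1 hgc.1, ibd.integral_fun_mul_eq_mul_integral hfb.1 hgd.1]
  · rw [hmim, Complex.mul_im, hfre, hfim, hgre, hgim]
    calc ∫ ω, (f ω * g ω).im ∂ℙ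
        = ∫ ω, ((f ω).re * (g ω).im + (f ω).im * (g ω).re) ∂ℙ := by
          simp_rw [Complex.mul_im]
      _ = (∫ ω, (f ω).re * (g ω).im ∂ℙ) + ∫ ω, (f ω).im * (g ω).re ∂ℙ :=
          integral_add had hbc
      _ = (∫ ω, (f ω).re ∂ℙ) * (∫ ω, (g ω).im ∂ℙ)
            + (∫ ω, (f ω).im ∂ℙ) * ∫ ω, (g ω).re ∂ℙ := by
          rw [iad.integral_fun_mul_eq_mul_integral hfa.1 hgd.1, ibc.integral_fun_mul_eq_mul_integral hfb.1 hgc.1]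

section Aux2
open MeasureTheory ProbabilityTheory Complex Real
open scoped FourierTransform

variable (K : ℝ → ℝ) (φK : ℝ → ℂ)

lemma aux_FK (hφK : ∀ t : ℝ, φK t = ∫ x : ℝ, Complex.exp (Complex.I * t * x) * K x) :
    ∀ t : ℝ, 𝓕 (fun x => (K x : ℂ)) (-(t / (2 * Real.pi))) = φK t := by
  intro t
  rw [Real.fourier_real_eq_integral_exp_smul, hφK]
  apply integral_congr_ae
  filter_upwards with x
  rw [smul_eq_mul]
  congr 1
  have hπ : (Real.pi : ℝ) ≠ 0 := Real.pi_ne_zero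
  have : (-2 * Real.pi * x * (-(t / (2 * Real.pi)))) = t * x := by
    field_simp
  rw [this]
  push_cast
  ring

lemma aux_phiK_cont (hKint : Integrable K)
    (hφK : ∀ t : ℝ, φK t = ∫ x : ℝ, Complex.exp (Complex.I * t * x) * K x) :
    Continuous φK := by
  have h1 : Continuous (𝓕 (fun x => (K x : ℂ))) :=
    VectorFourier.fourierIntegral_continuous Real.continuous_fourierChar
      continuous_inner hKint.ofReal
  have h2 : φK = fun t => 𝓕 (fun x => (K x : ℂ)) (-(t / (2 * Real.pi))) :=
    funext fun t => (aux_FK K φK hφK t).symm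
  rw [h2]
  exact h1.comp (by continuity)

lemma aux_inversion (hKc : Continuous K) (hKint : Integrable K)
    (hφK : ∀ t : ℝ, φK t = ∫ x : ℝ, Complex.exp (Complex.I * t * x) * K x)
    (hφKint : Integrable φK) (u : ℝ) :
    ∫ t : ℝ, Complex.exp (-(Complex.I * t * u)) * φK t = ((2 * Real.pi : ℝ) : ℂ) * K u := by
  have hπ : (0:ℝ) < 2 * Real.pi := by positivity
  set Kc : ℝ → ℂ := fun x => (K x : ℂ) with hKcdef
  have hKcint : Integrable Kc := hKint.ofReal
  have hFK := aux_FK K φK hφK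
  have hFKeq : 𝓕 Kc = fun ξ => φK (-(2 * Real.pi) * ξ) := by
    funext ξ
    rw [← hFK (-(2 * Real.pi) * ξ)]
    congr 1
    field_simp
    rfl
  have hFKint : Integrable (𝓕 Kc) := by
    rw [hFKeq]
    exact hφKint.comp_mul_left' (neg_ne_zero.mpr hπ.ne')
  have hinv : 𝓕⁻ (𝓕 Kc) u = Kc u :=
    hKcint.fourierInv_fourier_eq hFKint ((Complex.continuous_ofReal.comp hKc).continuousAt)
  have hstep : ∫ s : ℝ, Complex.exp (-(Complex.I * ((-(2 * Real.pi) * s : ℝ) : ℂ) * u)) *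
      φK (-(2 * Real.pi) * s) = Kc u := by
    rw [← hinv, Real.fourierInv_eq_fourier_neg,
      Real.fourier_real_eq_integral_exp_smul]
    apply integral_congr_ae
    filter_upwards with s
    rw [hFKeq, smul_eq_mul]
    congr 1
    push_cast
    ring
  have hcv := MeasureTheory.Measure.integral_comp_mul_left
    (fun t => Complex.exp (-(Complex.I * t * u)) * φK t) (-(2 * Real.pi))
  rw [hstep] at hcv
  -- hcv : Kc u = |(-(2π))⁻¹| • ∫ t, ...
  have habs : |(-(2 * Real.pi))⁻¹| = (2 * Real.pi)⁻¹ := by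
    rw [abs_inv, abs_neg, abs_of_pos hπ]
  rw [habs] at hcv
  have : ((2 * Real.pi : ℝ) : ℂ) * Kc u = ((2 * Real.pi : ℝ) : ℂ) *
      (((2 * Real.pi)⁻¹ : ℝ) • ∫ t : ℝ, Complex.exp (-(Complex.I * t * u)) * φK t) := by
    rw [← hcv]
  rw [Complex.real_smul, ← mul_assoc] at this
  calc ∫ t : ℝ, Complex.exp (-(Complex.I * t * u)) * φK t
      = 1 * ∫ t : ℝ, Complex.exp (-(Complex.I * t * u)) * φK t := (one_mul _).symm
    _ = ((2 * Real.pi : ℝ) : ℂ) * (((2 * Real.pi)⁻¹ : ℝ) : ℂ) *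
        ∫ t : ℝ, Complex.exp (-(Complex.I * t * u)) * φK t := by
        congr 1
        have h2 : (2 * (Real.pi:ℂ)) ≠ 0 := by
          have := Complex.ofReal_ne_zero.mpr hπ.ne'
          push_cast at this
          exact this
        push_cast
        rw [mul_inv_cancel₀ h2]
    _ = ((2 * Real.pi : ℝ) : ℂ) * Kc u := this.symm
    _ = ((2 * Real.pi : ℝ) : ℂ) * K u := rfl

lemma aux_inversion_scaled (hKc : Continuous K) (hKint : Integrable K)
    (hφK : ∀ t : ℝ, φK t = ∫ x : ℝ, Complex.exp (Complex.I * t * x) * K x)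
    (hφKint : Integrable φK) {h : ℝ} (hh : 0 < h) (u : ℝ) :
    ∫ t : ℝ, Complex.exp (-(Complex.I * t * u)) * φK (t * h)
      = ((2 * Real.pi * h⁻¹ : ℝ) : ℂ) * K (u / h) := by
  have hcv := MeasureTheory.Measure.integral_comp_mul_right
    (fun s => Complex.exp (-(Complex.I * s * ((u / h : ℝ) : ℂ))) * φK s) h
  have heq : ∀ t : ℝ, Complex.exp (-(Complex.I * ((t * h : ℝ) : ℂ) * ((u / h : ℝ) : ℂ)))
      = Complex.exp (-(Complex.I * t * u)) := by
    intro t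
    congr 1
    have hhc : (h : ℂ) ≠ 0 := Complex.ofReal_ne_zero.mpr hh.ne'
    have : ((t * h : ℝ) : ℂ) * ((u / h : ℝ) : ℂ) = (t : ℂ) * u := by
      push_cast
      field_simp
    rw [mul_assoc, this, mul_assoc]
  have hL : (∫ t : ℝ, Complex.exp (-(Complex.I * ((t * h : ℝ) : ℂ) * ((u / h : ℝ) : ℂ)))
      * φK (t * h)) = ∫ t : ℝ, Complex.exp (-(Complex.I * t * u)) * φK (t * h) := by
    apply integral_congr_ae
    filter_upwards with t
    rw [heq t]
  rw [hL] at hcv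
  rw [hcv, aux_inversion K φK hKc hKint hφK hφKint (u / h), abs_of_pos (inv_pos.mpr hh),
    Complex.real_smul]
  push_cast
  ring

end Aux2


/-- For real random variables `(X, Z)` with `E|Z| < ∞`, `ε` independent
of the pair `(X, Z)`, `Y = X + ε`, nowhere-vanishing `φ_ε(t) = E[exp(itε)]`, and a
continuous integrable kernel `K` with integrable Fourier transform `φ_K`, if
`t ↦ φ_K(th)/φ_ε(t)` is integrable then for all `x`:
`(2π)⁻¹ ∫ exp(−itx) φ_K(th) E[Z exp(itY)]/φ_ε(t) dt = h⁻¹ E[Z K((x − X)/h)]`. -/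
theorem stmt_6 {Ω : Type*} [MeasureSpace Ω] [IsProbabilityMeasure (ℙ : Measure Ω)]
    (X Z ε : Ω → ℝ) (hX : Measurable X) (hZ : Measurable Z) (hε : Measurable ε)
    (hZint : Integrable Z ℙ)
    (hindep : IndepFun (fun ω => (X ω, Z ω)) ε ℙ)
    (Y : Ω → ℝ) (hY : Y = fun ω => X ω + ε ω)
    (φε : ℝ → ℂ) (hφε : ∀ t : ℝ, φε t = ∫ ω, Complex.exp (Complex.I * t * ε ω) ∂ℙ)
    (hφε0 : ∀ t, φε t ≠ 0)
    (K : ℝ → ℝ) (hKc : Continuous K) (hKint : Integrable K)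
    (φK : ℝ → ℂ) (hφK : ∀ t : ℝ, φK t = ∫ x : ℝ, Complex.exp (Complex.I * t * x) * K x)
    (hφKint : Integrable φK)
    (h : ℝ) (hh : 0 < h)
    (hint : Integrable (fun t : ℝ => φK (t * h) / φε t)) :
    ∀ x : ℝ,
      ((2 * Real.pi : ℝ) : ℂ)⁻¹ *
          ∫ t : ℝ, Complex.exp (-(Complex.I * t * x)) * φK (t * h) *
            (∫ ω, (Z ω : ℂ) * Complex.exp (Complex.I * t * Y ω) ∂ℙ) / φε t
        = ((h⁻¹ * ∫ ω, Z ω * K ((x - X ω) / h) ∂ℙ : ℝ) : ℂ) := by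
  intro x
  subst hY
  have hπ : (0:ℝ) < 2 * Real.pi := by positivity
  have hnorm : ∀ (t r : ℝ), ‖Complex.exp (Complex.I * t * r)‖ = 1 := fun t r =>
    norm_exp_I_mul_ofReal _ (by simp)
  have hnorm2 : ∀ (t r : ℝ), ‖Complex.exp (-(Complex.I * t * r))‖ = 1 := fun t r =>
    norm_exp_I_mul_ofReal _ (by simp)
  -- measurability and integrability of the basic pieces
  have hfmeas : ∀ t : ℝ, Measurable fun ω => (Z ω : ℂ) * Complex.exp (Complex.I * t * X ω) := by
    intro t
    exact (Complex.measurable_ofReal.comp hZ).mul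
      (Complex.measurable_exp.comp (measurable_const.mul (Complex.measurable_ofReal.comp hX)))
  have hfint : ∀ t : ℝ, Integrable (fun ω => (Z ω : ℂ) *
      Complex.exp (Complex.I * t * X ω)) ℙ := by
    intro t
    refine hZint.abs.mono' (hfmeas t).aestronglyMeasurable ?_
    filter_upwards with ω
    rw [norm_mul, hnorm, Complex.norm_real, Real.norm_eq_abs, mul_one]
  have hgint : ∀ t : ℝ, Integrable (fun ω => Complex.exp (Complex.I * t * ε ω)) ℙ := by
    intro t
    refine (integrable_const (1:ℝ)).mono' ?_ ?_
    · exact (Complex.measurable_exp.comp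
        (measurable_const.mul (Complex.measurable_ofReal.comp hε))).aestronglyMeasurable
    · filter_upwards with ω
      rw [hnorm]
  have hindep' : ∀ t : ℝ, IndepFun (fun ω => (Z ω : ℂ) * Complex.exp (Complex.I * t * X ω))
      (fun ω => Complex.exp (Complex.I * t * ε ω)) ℙ := by
    intro t
    have hF : Measurable fun p : ℝ × ℝ => (p.2 : ℂ) * Complex.exp (Complex.I * t * p.1) :=
      (Complex.measurable_ofReal.comp measurable_snd).mul
        (Complex.measurable_exp.comp
          (measurable_const.mul (Complex.measurable_ofReal.comp measurable_fst)))
    have hG : Measurable fun e : ℝ => Complex.exp (Complex.I * t * e) :=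
      Complex.measurable_exp.comp (measurable_const.mul Complex.measurable_ofReal)
    exact hindep.comp hF hG
  -- factorization by independence
  have hfact : ∀ t : ℝ, (∫ ω, (Z ω : ℂ) * Complex.exp (Complex.I * t * ((X ω + ε ω : ℝ) : ℂ)) ∂ℙ)
      = (∫ ω, (Z ω : ℂ) * Complex.exp (Complex.I * t * X ω) ∂ℙ) * φε t := by
    intro t
    have hsplit : ∀ ω, (Z ω : ℂ) * Complex.exp (Complex.I * t * ((X ω + ε ω : ℝ) : ℂ))
        = ((Z ω : ℂ) * Complex.exp (Complex.I * t * X ω)) *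
          Complex.exp (Complex.I * t * ε ω) := by
      intro ω
      have harg : Complex.I * t * ((X ω + ε ω : ℝ) : ℂ)
          = Complex.I * t * X ω + Complex.I * t * ε ω := by
        push_cast
        ring
      rw [harg, Complex.exp_add, ← mul_assoc]
    rw [hφε t, integral_congr_ae (Filter.Eventually.of_forall hsplit)]
    exact aux_indep_integral_mul (hindep' t) (hfint t) (hgint t)
  -- remove φε from the integrand
  have key : ∀ t : ℝ, Complex.exp (-(Complex.I * t * x)) * φK (t * h) *
      (∫ ω, (Z ω : ℂ) * Complex.exp (Complex.I * t * ((X ω + ε ω : ℝ) : ℂ)) ∂ℙ) / φε t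
      = Complex.exp (-(Complex.I * t * x)) * φK (t * h) *
        ∫ ω, (Z ω : ℂ) * Complex.exp (Complex.I * t * X ω) ∂ℙ := by
    intro t
    rw [hfact t, ← mul_assoc, mul_div_cancel_right₀ _ (hφε0 t)]
  beta_reduce
  rw [integral_congr_ae (Filter.Eventually.of_forall key)]
  -- Fubini
  have hφKcont : Continuous φK := aux_phiK_cont K φK hKint hφK
  have hFmeas : AEStronglyMeasurable
      (Function.uncurry fun (t : ℝ) (ω : Ω) =>
        Complex.exp (-(Complex.I * t * x)) * φK (t * h) *
          ((Z ω : ℂ) * Complex.exp (Complex.I * t * X ω)))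
      ((volume : Measure ℝ).prod ℙ) := by
    apply Measurable.aestronglyMeasurable
    apply Measurable.mul
    · apply Measurable.mul
      · exact Complex.measurable_exp.comp
          (((measurable_const.mul (Complex.measurable_ofReal.comp measurable_fst)).mul
            measurable_const).neg)
      · exact hφKcont.measurable.comp (measurable_fst.mul_const h)
    · exact (Complex.measurable_ofReal.comp (hZ.comp measurable_snd)).mul
        (Complex.measurable_exp.comp
          ((measurable_const.mul (Complex.measurable_ofReal.comp measurable_fst)).mul
            (Complex.measurable_ofReal.comp (hX.comp measurable_snd))))
  have hdom : Integrable (fun p : ℝ × Ω => ‖φK (p.1 * h)‖ * |Z p.2|)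
      ((volume : Measure ℝ).prod ℙ) :=
    Integrable.mul_prod (hφKint.comp_mul_right' hh.ne').norm hZint.abs
  have hFint : Integrable
      (Function.uncurry fun (t : ℝ) (ω : Ω) =>
        Complex.exp (-(Complex.I * t * x)) * φK (t * h) *
          ((Z ω : ℂ) * Complex.exp (Complex.I * t * X ω)))
      ((volume : Measure ℝ).prod ℙ) := by
    refine hdom.mono' hFmeas ?_
    filter_upwards with p
    obtain ⟨t, ω⟩ := p
    simp only [Function.uncurry_apply_pair]
    rw [norm_mul, norm_mul, norm_mul, hnorm2, hnorm, Complex.norm_real, Real.norm_eq_abs,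
      one_mul, mul_one]
  have hswap : ∫ t : ℝ, Complex.exp (-(Complex.I * t * x)) * φK (t * h) *
      ∫ ω, (Z ω : ℂ) * Complex.exp (Complex.I * t * X ω) ∂ℙ
      = ∫ ω, (∫ t : ℝ, Complex.exp (-(Complex.I * t * x)) * φK (t * h) *
          ((Z ω : ℂ) * Complex.exp (Complex.I * t * X ω))) ∂ℙ := by
    rw [← MeasureTheory.integral_integral_swap hFint]
    apply integral_congr_ae
    filter_upwards with t
    exact (integral_const_mul _ _).symm
  rw [hswap]
  -- inner integral evaluation
  have hinner : ∀ ω, (∫ t : ℝ, Complex.exp (-(Complex.I * t * x)) * φK (t * h) *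
      ((Z ω : ℂ) * Complex.exp (Complex.I * t * X ω)))
      = ((2 * Real.pi * h⁻¹ : ℝ) : ℂ) * ((Z ω * K ((x - X ω) / h) : ℝ) : ℂ) := by
    intro ω
    have h1 : ∀ t : ℝ, Complex.exp (-(Complex.I * t * x)) * φK (t * h) *
        ((Z ω : ℂ) * Complex.exp (Complex.I * t * X ω))
        = (Z ω : ℂ) * (Complex.exp (-(Complex.I * t * ((x - X ω : ℝ) : ℂ))) * φK (t * h)) := by
      intro t
      have hprod : Complex.exp (-(Complex.I * t * x)) * Complex.exp (Complex.I * t * X ω)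
          = Complex.exp (-(Complex.I * t * ((x - X ω : ℝ) : ℂ))) := by
        rw [← Complex.exp_add]
        congr 1
        push_cast
        ring
      calc Complex.exp (-(Complex.I * t * x)) * φK (t * h) *
          ((Z ω : ℂ) * Complex.exp (Complex.I * t * X ω))
          = (Z ω : ℂ) * (Complex.exp (-(Complex.I * t * x)) *
              Complex.exp (Complex.I * t * X ω) * φK (t * h)) := by ring
        _ = (Z ω : ℂ) * (Complex.exp (-(Complex.I * t * ((x - X ω : ℝ) : ℂ))) * φK (t * h)) := by
            rw [hprod]
    rw [integral_congr_ae (Filter.Eventually.of_forall h1), integral_const_mul,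
      aux_inversion_scaled K φK hKc hKint hφK hφKint hh (x - X ω)]
    push_cast
    ring
  rw [integral_congr_ae (Filter.Eventually.of_forall hinner), integral_const_mul]
  have hR : ∫ a : Ω, ((Z a * K ((x - X a) / h) : ℝ) : ℂ) ∂ℙ
      = ((∫ a : Ω, Z a * K ((x - X a) / h) ∂ℙ : ℝ) : ℂ) := integral_ofReal
  rw [hR]
  generalize (∫ a : Ω, Z a * K ((x - X a) / h) ∂ℙ : ℝ) = R

  have hπc : ((2 * Real.pi : ℝ) : ℂ) ≠ 0 := Complex.ofReal_ne_zero.mpr hπ.ne'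
  push_cast at hπc ⊢
  field_simp
end

section
/- Let (Y₁,Z₁),…,(Y_n,Z_n) be i.i.d. pairs of real random variables with E[Z₁²] < ∞, let φ_ε : ℝ → ℂ be continuous and nowhere vanishing, let K : ℝ → ℝ be integrable with Fourier transform φ_K, let h > 0, and assume t ↦ φ_K(th)/φ_ε(t) is integrable. Define r̂(x) = (2π)⁻¹ ∫_ℝ exp(−itx) φ_K(th) ( n⁻¹ Σ_{i=1}^n Z_i exp(itY_i) ) / φ_ε(t) dt. Then E[ sup_{x ∈ ℝ} |r̂(x) − E r̂(x)|² ] ≤ (2π)⁻² n⁻¹ E[Z₁²] ( ∫_ℝ |φ_K(th)|/|φ_ε(t)| dt )². -/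
open MeasureTheory ProbabilityTheory

lemma rpow_two_eq (x : ℝ) : x ^ (2:ℝ) = x ^ 2 := by
  rw [show (2:ℝ) = ((2:ℕ):ℝ) by norm_num, Real.rpow_natCast]

lemma cs_weighted {α : Type*} [MeasurableSpace α] (μ : Measure α) (a g : α → ℝ)
    (han : ∀ t, 0 ≤ a t) (hgn : ∀ t, 0 ≤ g t)
    (hma : AEStronglyMeasurable a μ) (hmg : AEStronglyMeasurable g μ)
    (ha : Integrable a μ) (hag2 : Integrable (fun t => a t * g t ^ 2) μ) :
    (∫ t, a t * g t ∂μ) ^ 2 ≤ (∫ t, a t ∂μ) * ∫ t, a t * g t ^ 2 ∂μ := by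
  have h22 : (2:ℝ).HolderConjugate 2 := Real.HolderConjugate.two_two
  set f1 : α → ℝ := fun t => Real.sqrt (a t) with hf1
  set f2 : α → ℝ := fun t => Real.sqrt (a t) * g t with hf2
  have hm1 : AEStronglyMeasurable f1 μ := Real.continuous_sqrt.comp_aestronglyMeasurable hma
  have hm2 : AEStronglyMeasurable f2 μ := hm1.mul hmg
  have hsq1 : ∀ t, f1 t ^ 2 = a t := fun t => Real.sq_sqrt (han t)
  have hsq2 : ∀ t, f2 t ^ 2 = a t * g t ^ 2 := fun t => by
    simp only [hf2, mul_pow]; rw [Real.sq_sqrt (han t)]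
  have hL1 : MemLp f1 (ENNReal.ofReal 2) μ := by
    rw [show ENNReal.ofReal 2 = 2 by norm_num]
    exact (memLp_two_iff_integrable_sq hm1).2 (ha.congr (ae_of_all _ fun t => (hsq1 t).symm))
  have hL2 : MemLp f2 (ENNReal.ofReal 2) μ := by
    rw [show ENNReal.ofReal 2 = 2 by norm_num]
    exact (memLp_two_iff_integrable_sq hm2).2 (hag2.congr (ae_of_all _ fun t => (hsq2 t).symm))
  have key := integral_mul_le_Lp_mul_Lq_of_nonneg h22
    (ae_of_all _ fun t => Real.sqrt_nonneg (a t))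
    (ae_of_all _ fun t => mul_nonneg (Real.sqrt_nonneg _) (hgn t)) hL1 hL2
  have hX0 : 0 ≤ ∫ t, a t ∂μ := integral_nonneg han
  have hY0 : 0 ≤ ∫ t, a t * g t ^ 2 ∂μ :=
    integral_nonneg fun t => mul_nonneg (han t) (sq_nonneg _)
  have hL0 : 0 ≤ ∫ t, a t * g t ∂μ :=
    integral_nonneg fun t => mul_nonneg (han t) (hgn t)
  have keyL : ∫ t, a t * g t ∂μ ≤
      (∫ t, a t ∂μ) ^ (1/2 : ℝ) * (∫ t, a t * g t ^ 2 ∂μ) ^ (1/2 : ℝ) := by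
    calc ∫ t, a t * g t ∂μ = ∫ t, f1 t * f2 t ∂μ := by
          refine integral_congr_ae (ae_of_all _ fun t => ?_)
          simp only [hf1, hf2, ← mul_assoc, Real.mul_self_sqrt (han t)]
      _ ≤ (∫ t, f1 t ^ (2:ℝ) ∂μ) ^ (1/2 : ℝ) * (∫ t, f2 t ^ (2:ℝ) ∂μ) ^ (1/2 : ℝ) := key
      _ = (∫ t, a t ∂μ) ^ (1/2 : ℝ) * (∫ t, a t * g t ^ 2 ∂μ) ^ (1/2 : ℝ) := by
          congr 1
          · congr 1
            exact integral_congr_ae (ae_of_all _ fun t => by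
              simp only [rpow_two_eq]; exact hsq1 t)
          · congr 1
            exact integral_congr_ae (ae_of_all _ fun t => by
              simp only [rpow_two_eq]; exact hsq2 t)
  calc (∫ t, a t * g t ∂μ) ^ 2
      ≤ ((∫ t, a t ∂μ) ^ (1/2:ℝ) * (∫ t, a t * g t ^ 2 ∂μ) ^ (1/2:ℝ)) ^ 2 :=
        pow_le_pow_left₀ hL0 keyL 2
    _ = (∫ t, a t ∂μ) * ∫ t, a t * g t ^ 2 ∂μ := by
        have hsq : ∀ x : ℝ, 0 ≤ x → (x ^ (1/2:ℝ)) ^ 2 = x := fun x hx => by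
          rw [← Real.rpow_natCast (x ^ (1/2:ℝ)) 2, ← Real.rpow_mul hx]; norm_num
        rw [mul_pow, hsq _ hX0, hsq _ hY0]

lemma norm_exp_I_mul_mul (t y : ℝ) : ‖Complex.exp (Complex.I * t * y)‖ = 1 := by
  rw [Complex.norm_exp]
  have : (Complex.I * t * y).re = 0 := by simp
  rw [this, Real.exp_zero]

lemma norm_exp_neg_I_mul_mul (t y : ℝ) : ‖Complex.exp (-(Complex.I * t * y))‖ = 1 := by
  rw [Complex.norm_exp]
  have : (-(Complex.I * t * y)).re = 0 := by simp
  rw [this, Real.exp_zero]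

/-- For i.i.d. pairs `(Y_i, Z_i)` with `E[Z₁²] < ∞`, continuous
nowhere-vanishing `φ_ε`, integrable `K` with Fourier transform `φ_K`, `h > 0`, and
`t ↦ φ_K(th)/φ_ε(t)` integrable, the numerator estimator
`r̂(x) = (2π)⁻¹ ∫ exp(−itx) φ_K(th) (n⁻¹ ∑ Z_i exp(itY_i))/φ_ε(t) dt` satisfies
`E[sup_x |r̂(x) − E r̂(x)|²] ≤ (2π)⁻² n⁻¹ E[Z₁²] (∫ |φ_K(th)|/|φ_ε(t)| dt)²`. -/
theorem stmt_9 {Ω : Type*} [MeasureSpace Ω] [IsProbabilityMeasure (ℙ : Measure Ω)]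
    (n : ℕ) (hn : 1 ≤ n) (Y Z : Fin n → Ω → ℝ)
    (hmeas : ∀ i, Measurable (fun ω => (Y i ω, Z i ω)))
    (hindep : iIndepFun (fun i => fun ω => (Y i ω, Z i ω)) ℙ)
    (hident : ∀ i j, IdentDistrib (fun ω => (Y i ω, Z i ω)) (fun ω => (Y j ω, Z j ω)) ℙ ℙ)
    (hZ2 : Integrable (fun ω => (Z ⟨0, hn⟩ ω) ^ 2) ℙ)
    (K : ℝ → ℝ) (hK : Integrable K)
    (φK : ℝ → ℂ) (hφK : ∀ t : ℝ, φK t = ∫ x : ℝ, Complex.exp (Complex.I * t * x) * K x)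
    (φε : ℝ → ℂ) (hφεc : Continuous φε) (hφε0 : ∀ t, φε t ≠ 0)
    (h : ℝ) (hh : 0 < h)
    (hint : Integrable (fun t : ℝ => φK (t * h) / φε t))
    (rhat : Ω → ℝ → ℂ)
    (hrhat : ∀ ω x, rhat ω x =
      ((2 * Real.pi : ℝ) : ℂ)⁻¹ *
        ∫ t : ℝ, Complex.exp (-(Complex.I * t * x)) * φK (t * h) *
          ((n : ℂ)⁻¹ * ∑ i, (Z i ω : ℂ) * Complex.exp (Complex.I * t * Y i ω)) / φε t)
    (Er : ℝ → ℂ)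
    (hEr : ∀ x, Er x =
      ((2 * Real.pi : ℝ) : ℂ)⁻¹ *
        ∫ t : ℝ, Complex.exp (-(Complex.I * t * x)) * φK (t * h) *
          (∫ ω, (Z ⟨0, hn⟩ ω : ℂ) * Complex.exp (Complex.I * t * Y ⟨0, hn⟩ ω) ∂ℙ) / φε t) :
    (∫ ω, (⨆ x : ℝ, ‖rhat ω x - Er x‖ ^ 2) ∂ℙ)
      ≤ ((2 * Real.pi) ^ 2)⁻¹ * (n : ℝ)⁻¹ * (∫ ω, (Z ⟨0, hn⟩ ω) ^ 2 ∂ℙ)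
          * (∫ t : ℝ, ‖φK (t * h)‖ / ‖φε t‖) ^ 2 := by
  classical
  have hn0 : (n : ℝ) ≠ 0 := Nat.cast_ne_zero.2 (by omega)
  set i0 : Fin n := ⟨0, hn⟩ with hi0
  -- basic measurability
  have hYm : ∀ i, Measurable (Y i) := fun i => measurable_fst.comp (hmeas i)
  have hZm : ∀ i, Measurable (Z i) := fun i => measurable_snd.comp (hmeas i)
  -- identically distributed images
  have hidR : ∀ (i : Fin n) (f : ℝ × ℝ → ℝ), Measurable f →
      IdentDistrib (fun ω => f (Y i ω, Z i ω)) (fun ω => f (Y i0 ω, Z i0 ω)) ℙ ℙ :=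
    fun i f hf => (hident i i0).comp hf
  have hZ2i : ∀ i, Integrable (fun ω => Z i ω ^ 2) ℙ := fun i =>
    ((hidR i (fun p => p.2 ^ 2) (measurable_snd.pow_const 2)).integrable_iff).2 hZ2
  have hZ2eq : ∀ i, ∫ ω, Z i ω ^ 2 ∂ℙ = ∫ ω, Z i0 ω ^ 2 ∂ℙ := fun i =>
    (hidR i (fun p => p.2 ^ 2) (measurable_snd.pow_const 2)).integral_eq
  have hZmem2 : ∀ i, MemLp (Z i) 2 ℙ := fun i =>
    (memLp_two_iff_integrable_sq (hZm i).aestronglyMeasurable).2 (hZ2i i)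
  have hZ1 : ∀ i, Integrable (Z i) ℙ := fun i => (hZmem2 i).integrable one_le_two
  set EZ2 : ℝ := ∫ ω, Z i0 ω ^ 2 ∂ℙ with hEZ2
  set cZ : ℝ := ∫ ω, |Z i0 ω| ∂ℙ with hcZ
  have hcZ0 : 0 ≤ cZ := integral_nonneg fun ω => abs_nonneg _
  have hEZ20 : 0 ≤ EZ2 := integral_nonneg fun ω => sq_nonneg _
  -- the complex random functions
  set W : Fin n → ℝ → Ω → ℂ :=
    fun i t ω => (Z i ω : ℂ) * Complex.exp (Complex.I * t * Y i ω) with hW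
  have hWnorm : ∀ i t ω, ‖W i t ω‖ = |Z i ω| := by
    intro i t ω
    rw [hW]
    rw [norm_mul, norm_exp_I_mul_mul, mul_one, Complex.norm_real, Real.norm_eq_abs]
  have hWmeas : ∀ i (t : ℝ), Measurable (W i t) := by
    intro i t
    exact (Complex.measurable_ofReal.comp (hZm i)).mul
      (Complex.measurable_exp.comp
        ((Complex.measurable_ofReal.comp (hYm i)).const_mul (Complex.I * t)))
  have hWint : ∀ i (t : ℝ), Integrable (W i t) ℙ := by
    intro i t
    refine Integrable.mono' ((hZ1 i).abs) (hWmeas i t).aestronglyMeasurable ?_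
    exact ae_of_all _ fun ω => (hWnorm i t ω).le
  set m : ℝ → ℂ := fun t => ∫ ω, W i0 t ω ∂ℙ with hm
  have hmc : Continuous m := by
    apply continuous_of_dominated (bound := fun ω => |Z i0 ω|)
    · exact fun t => (hWmeas i0 t).aestronglyMeasurable
    · exact fun t => ae_of_all _ fun ω => (hWnorm i0 t ω).le
    · exact (hZ1 i0).abs
    · refine ae_of_all _ fun ω => ?_
      have : Continuous fun t : ℝ => Complex.I * t * (Y i0 ω : ℂ) :=
        (continuous_const.mul Complex.continuous_ofReal).mul continuous_const
      exact continuous_const.mul (Complex.continuous_exp.comp this)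
  have hmbound : ∀ t, ‖m t‖ ≤ cZ := by
    intro t
    calc ‖m t‖ ≤ ∫ ω, ‖W i0 t ω‖ ∂ℙ := norm_integral_le_integral_norm _
      _ = cZ := integral_congr_ae (ae_of_all _ fun ω => hWnorm i0 t ω)
  -- continuity of φK
  have hφKc : Continuous φK := by
    have hc : Continuous fun t : ℝ => ∫ x : ℝ, Complex.exp (Complex.I * t * x) * K x := by
      apply continuous_of_dominated (bound := fun x => ‖K x‖)
      · intro t
        refine AEStronglyMeasurable.mul ?_
          (Complex.continuous_ofReal.comp_aestronglyMeasurable hK.1)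
        exact (Complex.continuous_exp.comp
          ((continuous_const.mul continuous_const).mul
            Complex.continuous_ofReal)).aestronglyMeasurable
      · intro t
        refine ae_of_all _ fun x => ?_
        rw [norm_mul, norm_exp_I_mul_mul, one_mul, Complex.norm_real]
      · exact hK.norm
      · refine ae_of_all _ fun x => ?_
        exact (Complex.continuous_exp.comp
          ((continuous_const.mul Complex.continuous_ofReal).mul continuous_const)).mul
          continuous_const
    exact hc.congr fun t => (hφK t).symm
  -- the weight function a
  set a : ℝ → ℝ := fun t => ‖φK (t * h)‖ / ‖φε t‖ with ha
  have han : ∀ t, 0 ≤ a t := fun t => div_nonneg (norm_nonneg _) (norm_nonneg _)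
  have haint : Integrable a := hint.norm.congr (ae_of_all _ fun t => norm_div _ _)
  have hac : Continuous a := by
    refine Continuous.div ((hφKc.comp (continuous_mul_right h)).norm) hφεc.norm ?_
    exact fun t => norm_ne_zero_iff.2 (hφε0 t)
  have hia0 : 0 ≤ ∫ t, a t := integral_nonneg han
  -- the deviation process
  set D : Ω → ℝ → ℂ := fun ω t => (n : ℂ)⁻¹ * ∑ i, W i t ω - m t with hD
  set g : Ω → ℝ → ℝ := fun ω t => ‖D ω t‖ with hg
  have hgn : ∀ ω t, 0 ≤ g ω t := fun ω t => norm_nonneg _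
  set R : Ω → ℝ := fun ω => (∑ i, |Z i ω|) + cZ with hR
  have hninv : ‖(n : ℂ)⁻¹‖ ≤ 1 := by
    rw [norm_inv, Complex.norm_natCast]
    exact inv_le_one_of_one_le₀ (by exact_mod_cast hn)
  have hSubound : ∀ ω t, ‖(n : ℂ)⁻¹ * ∑ i, W i t ω‖ ≤ ∑ i, |Z i ω| := by
    intro ω t
    rw [norm_mul]
    calc ‖(n:ℂ)⁻¹‖ * ‖∑ i, W i t ω‖ ≤ 1 * ∑ i, ‖W i t ω‖ :=
          mul_le_mul hninv (norm_sum_le _ _) (norm_nonneg _) zero_le_one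
      _ = ∑ i, |Z i ω| := by rw [one_mul]; exact Finset.sum_congr rfl fun i _ => hWnorm i t ω
  have hgR : ∀ ω t, g ω t ≤ R ω := by
    intro ω t
    rw [hg, hD, hR]
    calc ‖(n : ℂ)⁻¹ * ∑ i, W i t ω - m t‖
        ≤ ‖(n : ℂ)⁻¹ * ∑ i, W i t ω‖ + ‖m t‖ := norm_sub_le _ _
      _ ≤ (∑ i, |Z i ω|) + cZ := add_le_add (hSubound ω t) (hmbound t)
  have hR0 : ∀ ω, 0 ≤ R ω := fun ω =>
    add_nonneg (Finset.sum_nonneg fun i _ => abs_nonneg _) hcZ0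
  have hRmem : MemLp R 2 ℙ := by
    refine MemLp.add ?_ (memLp_const cZ)
    exact memLp_finset_sum _ fun i _ => (hZmem2 i).norm
  have hR2int : Integrable (fun ω => R ω ^ 2) ℙ := hRmem.integrable_sq
  have hRmeas : Measurable R := by
    rw [hR]
    exact (Finset.measurable_sum _ fun i _ => (hZm i).abs).add measurable_const
  -- continuity of g in t and joint measurability
  have hDcont : ∀ ω, Continuous fun t => D ω t := by
    intro ω
    rw [hD]
    refine Continuous.sub ?_ hmc
    refine continuous_const.mul ?_
    refine continuous_finset_sum _ fun i _ => ?_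
    exact continuous_const.mul (Complex.continuous_exp.comp
      ((continuous_const.mul Complex.continuous_ofReal).mul continuous_const))
  have hgcont : ∀ ω, Continuous fun t => g ω t := fun ω => (hDcont ω).norm
  have hgMj : Measurable (fun p : Ω × ℝ => g p.1 p.2) := by
    rw [hg, hD]
    refine Measurable.norm (Measurable.sub ?_ (hmc.measurable.comp measurable_snd))
    refine Measurable.const_mul ?_ _
    refine Finset.measurable_sum _ fun i _ => ?_
    refine Measurable.mul ?_ ?_
    · exact Complex.measurable_ofReal.comp ((hZm i).comp measurable_fst)
    · refine Complex.measurable_exp.comp ?_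
      refine Measurable.mul ?_ (Complex.measurable_ofReal.comp ((hYm i).comp measurable_fst))
      exact (Complex.measurable_ofReal.comp measurable_snd).const_mul Complex.I
  -- integrability in t of the two integrands, for fixed ω, x
  have hI1int : ∀ (ω : Ω) (x : ℝ), Integrable (fun t : ℝ =>
      Complex.exp (-(Complex.I * t * x)) * φK (t * h) *
        ((n : ℂ)⁻¹ * ∑ i, W i t ω) / φε t) := by
    intro ω x
    have hb : Integrable (fun t : ℝ =>
        (Complex.exp (-(Complex.I * t * x)) * ((n : ℂ)⁻¹ * ∑ i, W i t ω)) *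
          (φK (t * h) / φε t)) := by
      refine hint.bdd_mul (c := ∑ i, |Z i ω|) ?_ (ae_of_all _ fun t => ?_)
      · refine Continuous.aestronglyMeasurable ?_
        refine Continuous.mul ?_ ?_
        · exact Complex.continuous_exp.comp
            (((continuous_const.mul Complex.continuous_ofReal).mul continuous_const).neg)
        · refine continuous_const.mul (continuous_finset_sum _ fun i _ => ?_)
          exact continuous_const.mul (Complex.continuous_exp.comp
            ((continuous_const.mul Complex.continuous_ofReal).mul continuous_const))
      · rw [norm_mul, norm_exp_neg_I_mul_mul, one_mul]
        exact hSubound ω t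
    exact hb.congr (ae_of_all _ fun t => by ring)
  have hI2int : ∀ x : ℝ, Integrable (fun t : ℝ =>
      Complex.exp (-(Complex.I * t * x)) * φK (t * h) * m t / φε t) := by
    intro x
    have hb : Integrable (fun t : ℝ =>
        (Complex.exp (-(Complex.I * t * x)) * m t) * (φK (t * h) / φε t)) := by
      refine hint.bdd_mul (c := cZ) ?_ (ae_of_all _ fun t => ?_)
      · refine Continuous.aestronglyMeasurable ?_
        refine Continuous.mul ?_ hmc
        exact Complex.continuous_exp.comp
          (((continuous_const.mul Complex.continuous_ofReal).mul continuous_const).neg)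
      · rw [norm_mul, norm_exp_neg_I_mul_mul, one_mul]
        exact hmbound t
    exact hb.congr (ae_of_all _ fun t => by ring)
  -- Step A : pointwise bound
  have hAbound : ∀ (ω : Ω) (x : ℝ),
      ‖rhat ω x - Er x‖ ≤ (2 * Real.pi)⁻¹ * ∫ t, a t * g ω t := by
    intro ω x
    rw [hrhat, hEr, ← mul_sub, ← integral_sub (hI1int ω x) (hI2int x)]
    rw [norm_mul]
    have hpi : ‖((2 * Real.pi : ℝ) : ℂ)⁻¹‖ = (2 * Real.pi)⁻¹ := by
      rw [norm_inv, Complex.norm_real, Real.norm_eq_abs,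
        abs_of_pos (by positivity : (0:ℝ) < 2 * Real.pi)]
    rw [hpi]
    refine mul_le_mul_of_nonneg_left ?_ (by positivity)
    refine le_trans (norm_integral_le_integral_norm _) (le_of_eq ?_)
    refine integral_congr_ae (ae_of_all _ fun t => ?_)
    have e1 : Complex.exp (-(Complex.I * t * x)) * φK (t * h) *
        ((n : ℂ)⁻¹ * ∑ i, W i t ω) / φε t -
        Complex.exp (-(Complex.I * t * x)) * φK (t * h) * m t / φε t =
        Complex.exp (-(Complex.I * t * x)) * φK (t * h) * D ω t / φε t := by
      simp only [hD]; ring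
    simp only [e1, norm_div, norm_mul, norm_exp_neg_I_mul_mul, one_mul, ha, hg]
    ring
  -- integrability in t of a * g and a * g^2
  have hagint : ∀ ω, Integrable (fun t => a t * g ω t) := by
    intro ω
    have hb : Integrable (fun t => g ω t * a t) := by
      refine haint.bdd_mul (c := R ω) (hgcont ω).aestronglyMeasurable ?_
      refine ae_of_all _ fun t => ?_
      rw [Real.norm_eq_abs, abs_of_nonneg (hgn ω t)]
      exact hgR ω t
    exact hb.congr (ae_of_all _ fun t => mul_comm _ _)
  have hag2int : ∀ ω, Integrable (fun t => a t * g ω t ^ 2) := by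
    intro ω
    have hb : Integrable (fun t => g ω t ^ 2 * a t) := by
      refine haint.bdd_mul (c := R ω ^ 2) ((hgcont ω).pow 2).aestronglyMeasurable ?_
      refine ae_of_all _ fun t => ?_
      rw [Real.norm_eq_abs, abs_of_nonneg (sq_nonneg _)]
      exact pow_le_pow_left₀ (hgn ω t) (hgR ω t) 2
    exact hb.congr (ae_of_all _ fun t => mul_comm _ _)
  -- joint integrability over Ω × ℝ
  have hGmeas : AEStronglyMeasurable (fun p : Ω × ℝ => a p.2 * g p.1 p.2 ^ 2)
      (Measure.prod ℙ volume) :=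
    ((hac.measurable.comp measurable_snd).mul (hgMj.pow_const 2)).aestronglyMeasurable
  have hHint : Integrable (fun p : Ω × ℝ => R p.1 ^ 2 * a p.2) (Measure.prod ℙ volume) :=
    hR2int.mul_prod haint
  have hGint : Integrable (fun p : Ω × ℝ => a p.2 * g p.1 p.2 ^ 2) (Measure.prod ℙ volume) := by
    refine hHint.mono' hGmeas (ae_of_all _ fun p => ?_)
    rw [Real.norm_eq_abs, abs_of_nonneg (mul_nonneg (han p.2) (sq_nonneg _))]
    calc a p.2 * g p.1 p.2 ^ 2 ≤ a p.2 * R p.1 ^ 2 :=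
        mul_le_mul_of_nonneg_left (pow_le_pow_left₀ (hgn _ _) (hgR _ _) 2) (han p.2)
      _ = R p.1 ^ 2 * a p.2 := mul_comm _ _
  set F : Ω → ℝ := fun ω => ∫ t, a t * g ω t ^ 2 with hF
  have hFint : Integrable F ℙ := hGint.integral_prod_left
  have hswap : ∫ ω, F ω ∂ℙ = ∫ t, a t * ∫ ω, g ω t ^ 2 ∂ℙ := by
    have h1 : ∫ ω, F ω ∂ℙ = ∫ t, ∫ ω, a t * g ω t ^ 2 ∂ℙ := by
      exact integral_integral_swap (f := fun ω t => a t * g ω t ^ 2) hGint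
    rw [h1]
    exact integral_congr_ae (ae_of_all _ fun t => integral_const_mul _ _)
  -- variance bound
  have hvar : ∀ t : ℝ, (∫ ω, g ω t ^ 2 ∂ℙ) ≤ (n : ℝ)⁻¹ * EZ2 := by
    intro t
    set A : Fin n → Ω → ℝ := fun i ω => Z i ω * Real.cos (t * Y i ω) with hA
    set B : Fin n → Ω → ℝ := fun i ω => Z i ω * Real.sin (t * Y i ω) with hB
    have hAm : ∀ i, Measurable (A i) := fun i =>
      (hZm i).mul (Real.measurable_cos.comp ((hYm i).const_mul t))
    have hBm : ∀ i, Measurable (B i) := fun i =>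
      (hZm i).mul (Real.measurable_sin.comp ((hYm i).const_mul t))
    have hA2 : ∀ i, Integrable (fun ω => A i ω ^ 2) ℙ := by
      intro i
      refine (hZ2i i).mono' ((hAm i).pow_const 2).aestronglyMeasurable
        (ae_of_all _ fun ω => ?_)
      show ‖A i ω ^ 2‖ ≤ Z i ω ^ 2
      rw [Real.norm_eq_abs, abs_of_nonneg (sq_nonneg _)]
      simp only [hA, mul_pow]
      calc Z i ω ^ 2 * Real.cos (t * Y i ω) ^ 2 ≤ Z i ω ^ 2 * 1 :=
          mul_le_mul_of_nonneg_left (Real.cos_sq_le_one _) (sq_nonneg _)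
        _ = Z i ω ^ 2 := mul_one _
    have hB2 : ∀ i, Integrable (fun ω => B i ω ^ 2) ℙ := by
      intro i
      refine (hZ2i i).mono' ((hBm i).pow_const 2).aestronglyMeasurable
        (ae_of_all _ fun ω => ?_)
      show ‖B i ω ^ 2‖ ≤ Z i ω ^ 2
      rw [Real.norm_eq_abs, abs_of_nonneg (sq_nonneg _)]
      simp only [hB, mul_pow]
      calc Z i ω ^ 2 * Real.sin (t * Y i ω) ^ 2 ≤ Z i ω ^ 2 * 1 :=
          mul_le_mul_of_nonneg_left (Real.sin_sq_le_one _) (sq_nonneg _)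
        _ = Z i ω ^ 2 := mul_one _
    have hAmem : ∀ i, MemLp (A i) 2 ℙ := fun i =>
      (memLp_two_iff_integrable_sq (hAm i).aestronglyMeasurable).2 (hA2 i)
    have hBmem : ∀ i, MemLp (B i) 2 ℙ := fun i =>
      (memLp_two_iff_integrable_sq (hBm i).aestronglyMeasurable).2 (hB2 i)
    have hA1 : ∀ i, Integrable (A i) ℙ := fun i => (hAmem i).integrable one_le_two
    have hB1 : ∀ i, Integrable (B i) ℙ := fun i => (hBmem i).integrable one_le_two
    have hindA : iIndepFun A ℙ :=
      hindep.comp (fun _ p => p.2 * Real.cos (t * p.1)) fun _ =>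
        measurable_snd.mul (Real.measurable_cos.comp (measurable_fst.const_mul t))
    have hindB : iIndepFun B ℙ :=
      hindep.comp (fun _ p => p.2 * Real.sin (t * p.1)) fun _ =>
        measurable_snd.mul (Real.measurable_sin.comp (measurable_fst.const_mul t))
    set SA : Ω → ℝ := ∑ i, A i with hSA
    set SB : Ω → ℝ := ∑ i, B i with hSB
    have hSAmem : MemLp SA 2 ℙ := memLp_finset_sum' _ fun i _ => hAmem i
    have hSBmem : MemLp SB 2 ℙ := memLp_finset_sum' _ fun i _ => hBmem i
    have hSAapp : ∀ ω, SA ω = ∑ i, A i ω := fun ω => by simp [hSA]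
    have hSBapp : ∀ ω, SB ω = ∑ i, B i ω := fun ω => by simp [hSB]
    have hvarsumA : variance SA ℙ = ∑ i, variance (A i) ℙ :=
      IndepFun.variance_sum (fun i _ => hAmem i) fun i _ j _ hij => hindA.indepFun hij
    have hvarsumB : variance SB ℙ = ∑ i, variance (B i) ℙ :=
      IndepFun.variance_sum (fun i _ => hBmem i) fun i _ j _ hij => hindB.indepFun hij
    set cA : ℝ := ∫ ω, A i0 ω ∂ℙ with hcA
    set cB : ℝ := ∫ ω, B i0 ω ∂ℙ with hcB
    have hAeq : ∀ i, ∫ ω, A i ω ∂ℙ = cA := fun i =>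
      (hidR i (fun p => p.2 * Real.cos (t * p.1))
        (measurable_snd.mul (Real.measurable_cos.comp (measurable_fst.const_mul t)))).integral_eq
    have hBeq : ∀ i, ∫ ω, B i ω ∂ℙ = cB := fun i =>
      (hidR i (fun p => p.2 * Real.sin (t * p.1))
        (measurable_snd.mul (Real.measurable_sin.comp (measurable_fst.const_mul t)))).integral_eq
    have hESA : ∫ ω, SA ω ∂ℙ = n * cA := by
      have h1 : ∫ ω, SA ω ∂ℙ = ∑ i, ∫ ω, A i ω ∂ℙ := by
        rw [integral_congr_ae (ae_of_all _ fun ω => hSAapp ω)]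
        exact integral_finset_sum _ fun i _ => hA1 i
      rw [h1, Finset.sum_congr rfl fun i _ => hAeq i]
      simp [Finset.sum_const, Finset.card_univ, nsmul_eq_mul]
    have hESB : ∫ ω, SB ω ∂ℙ = n * cB := by
      have h1 : ∫ ω, SB ω ∂ℙ = ∑ i, ∫ ω, B i ω ∂ℙ := by
        rw [integral_congr_ae (ae_of_all _ fun ω => hSBapp ω)]
        exact integral_finset_sum _ fun i _ => hB1 i
      rw [h1, Finset.sum_congr rfl fun i _ => hBeq i]
      simp [Finset.sum_const, Finset.card_univ, nsmul_eq_mul]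
    have hreId : ∀ ω, (n:ℝ)⁻¹ * (∑ i, A i ω) - cA
        = (n:ℝ)⁻¹ * (SA ω - ∫ ω', SA ω' ∂ℙ) := by
      intro ω
      rw [hESA, hSAapp ω]
      field_simp
    have himId : ∀ ω, (n:ℝ)⁻¹ * (∑ i, B i ω) - cB
        = (n:ℝ)⁻¹ * (SB ω - ∫ ω', SB ω' ∂ℙ) := by
      intro ω
      rw [hESB, hSBapp ω]
      field_simp
    have hvarSA : ∫ ω, ((n:ℝ)⁻¹ * (∑ i, A i ω) - cA) ^ 2 ∂ℙ
        = (n:ℝ)⁻¹ ^ 2 * variance SA ℙ := by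
      rw [variance_eq_integral hSAmem.aestronglyMeasurable.aemeasurable, ← integral_const_mul]
      refine integral_congr_ae (ae_of_all _ fun ω => ?_)
      beta_reduce
      rw [hreId ω]
      ring
    have hvarSB : ∫ ω, ((n:ℝ)⁻¹ * (∑ i, B i ω) - cB) ^ 2 ∂ℙ
        = (n:ℝ)⁻¹ ^ 2 * variance SB ℙ := by
      rw [variance_eq_integral hSBmem.aestronglyMeasurable.aemeasurable, ← integral_const_mul]
      refine integral_congr_ae (ae_of_all _ fun ω => ?_)
      beta_reduce
      rw [himId ω]
      ring
    have hABsq : ∀ i, (∫ ω, A i ω ^ 2 ∂ℙ) + (∫ ω, B i ω ^ 2 ∂ℙ) = EZ2 := by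
      intro i
      rw [← integral_add (hA2 i) (hB2 i), ← hZ2eq i]
      refine integral_congr_ae (ae_of_all _ fun ω => ?_)
      show A i ω ^ 2 + B i ω ^ 2 = Z i ω ^ 2
      simp only [hA, hB]
      have hs := Real.sin_sq_add_cos_sq (t * Y i ω)
      linear_combination (Z i ω ^ 2) * hs
    have hvarAle : ∑ i, variance (A i) ℙ ≤ ∑ i, ∫ ω, A i ω ^ 2 ∂ℙ := by
      refine Finset.sum_le_sum fun i _ => ?_
      refine le_trans (variance_le_expectation_sq (hAm i).aestronglyMeasurable) (le_of_eq ?_)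
      exact integral_congr_ae (ae_of_all _ fun ω => by simp)
    have hvarBle : ∑ i, variance (B i) ℙ ≤ ∑ i, ∫ ω, B i ω ^ 2 ∂ℙ := by
      refine Finset.sum_le_sum fun i _ => ?_
      refine le_trans (variance_le_expectation_sq (hBm i).aestronglyMeasurable) (le_of_eq ?_)
      exact integral_congr_ae (ae_of_all _ fun ω => by simp)
    have hre2int : Integrable (fun ω => ((n:ℝ)⁻¹ * (∑ i, A i ω) - cA) ^ 2) ℙ := by
      have hmem : MemLp (fun ω => (n:ℝ)⁻¹ * (∑ i, A i ω) - cA) 2 ℙ := by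
        refine MemLp.sub ?_ (memLp_const cA)
        exact (memLp_finset_sum _ fun i _ => hAmem i).const_mul _
      exact hmem.integrable_sq
    have him2int : Integrable (fun ω => ((n:ℝ)⁻¹ * (∑ i, B i ω) - cB) ^ 2) ℙ := by
      have hmem : MemLp (fun ω => (n:ℝ)⁻¹ * (∑ i, B i ω) - cB) 2 ℙ := by
        refine MemLp.sub ?_ (memLp_const cB)
        exact (memLp_finset_sum _ fun i _ => hBmem i).const_mul _
      exact hmem.integrable_sq
    -- decompose W and D into real and imaginary parts
    have hWAB : ∀ i ω, W i t ω = (A i ω : ℂ) + (B i ω : ℂ) * Complex.I := by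
      intro i ω
      have h1 : Complex.I * t * (Y i ω : ℂ) = ((t * Y i ω : ℝ) : ℂ) * Complex.I := by
        push_cast; ring
      simp only [hW, hA, hB, h1, Complex.exp_mul_I]
      push_cast
      ring
    have hmAB : m t = (cA : ℂ) + (cB : ℂ) * Complex.I := by
      simp only [hm]
      calc ∫ ω, W i0 t ω ∂ℙ
          = ∫ ω, ((A i0 ω : ℂ) + (B i0 ω : ℂ) * Complex.I) ∂ℙ :=
            integral_congr_ae (ae_of_all _ fun ω => hWAB i0 ω)
        _ = (cA : ℂ) + (cB : ℂ) * Complex.I := by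
            have h1 : Integrable (fun ω => ((A i0 ω : ℝ) : ℂ)) ℙ := (hA1 i0).ofReal
            have h2 : Integrable (fun ω => ((B i0 ω : ℝ) : ℂ) * Complex.I) ℙ :=
              ((hB1 i0).ofReal).mul_const Complex.I
            have e2 : (∫ ω, ((A i0 ω : ℝ) : ℂ) ∂ℙ) = ((cA : ℝ) : ℂ) := by
              rw [hcA]; exact integral_ofReal
            have e3 : (∫ ω, ((B i0 ω : ℝ) : ℂ) ∂ℙ) = ((cB : ℝ) : ℂ) := by
              rw [hcB]; exact integral_ofReal
            rw [integral_add h1 h2, integral_mul_const, e2, e3]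
    have hsumW : ∀ ω, ∑ i, W i t ω
        = ((∑ i, A i ω : ℝ) : ℂ) + ((∑ i, B i ω : ℝ) : ℂ) * Complex.I := by
      intro ω
      rw [Finset.sum_congr rfl fun i _ => hWAB i ω, Finset.sum_add_distrib, ← Finset.sum_mul]
      norm_cast
    have hDeq : ∀ ω, D ω t = (((n:ℝ)⁻¹ * (∑ i, A i ω) - cA : ℝ) : ℂ)
        + (((n:ℝ)⁻¹ * (∑ i, B i ω) - cB : ℝ) : ℂ) * Complex.I := by
      intro ω
      simp only [hD]
      rw [hsumW ω, hmAB]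
      push_cast
      ring
    have hgsq : ∀ ω, g ω t ^ 2 = ((n:ℝ)⁻¹ * (∑ i, A i ω) - cA) ^ 2
        + ((n:ℝ)⁻¹ * (∑ i, B i ω) - cB) ^ 2 := by
      intro ω
      simp only [hg]
      rw [hDeq ω, Complex.sq_norm, Complex.normSq_add_mul_I]
    calc (∫ ω, g ω t ^ 2 ∂ℙ)
        = (∫ ω, ((n:ℝ)⁻¹ * (∑ i, A i ω) - cA) ^ 2 ∂ℙ)
          + ∫ ω, ((n:ℝ)⁻¹ * (∑ i, B i ω) - cB) ^ 2 ∂ℙ := by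
          rw [← integral_add hre2int him2int]
          exact integral_congr_ae (ae_of_all _ fun ω => hgsq ω)
      _ = (n:ℝ)⁻¹ ^ 2 * variance SA ℙ + (n:ℝ)⁻¹ ^ 2 * variance SB ℙ := by
          rw [hvarSA, hvarSB]
      _ = (n:ℝ)⁻¹ ^ 2 * (∑ i, variance (A i) ℙ + ∑ i, variance (B i) ℙ) := by
          rw [hvarsumA, hvarsumB]; ring
      _ ≤ (n:ℝ)⁻¹ ^ 2 * ((∑ i, ∫ ω, A i ω ^ 2 ∂ℙ) + ∑ i, ∫ ω, B i ω ^ 2 ∂ℙ) :=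
          mul_le_mul_of_nonneg_left (add_le_add hvarAle hvarBle) (by positivity)
      _ = (n:ℝ)⁻¹ ^ 2 * ((n : ℝ) * EZ2) := by
          rw [← Finset.sum_add_distrib, Finset.sum_congr rfl fun i _ => hABsq i]
          simp [Finset.sum_const, Finset.card_univ, nsmul_eq_mul]
      _ = (n:ℝ)⁻¹ * EZ2 := by field_simp
  -- final assembly
  have hsup : ∀ ω, (⨆ x : ℝ, ‖rhat ω x - Er x‖ ^ 2)
      ≤ (2 * Real.pi)⁻¹ ^ 2 * ((∫ t, a t) * F ω) := by
    intro ω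
    refine ciSup_le fun x => ?_
    calc ‖rhat ω x - Er x‖ ^ 2 ≤ ((2 * Real.pi)⁻¹ * ∫ t, a t * g ω t) ^ 2 :=
        pow_le_pow_left₀ (norm_nonneg _) (hAbound ω x) 2
      _ = (2 * Real.pi)⁻¹ ^ 2 * (∫ t, a t * g ω t) ^ 2 := mul_pow _ _ 2
      _ ≤ (2 * Real.pi)⁻¹ ^ 2 * ((∫ t, a t) * F ω) := by
          refine mul_le_mul_of_nonneg_left ?_ (by positivity)
          exact cs_weighted volume a (g ω) han (hgn ω) hac.aestronglyMeasurable
            (hgcont ω).aestronglyMeasurable haint (hag2int ω)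
  have hmain : (∫ ω, (⨆ x : ℝ, ‖rhat ω x - Er x‖ ^ 2) ∂ℙ)
      ≤ ∫ ω, (2 * Real.pi)⁻¹ ^ 2 * ((∫ t, a t) * F ω) ∂ℙ := by
    refine integral_mono_of_nonneg (ae_of_all _ fun ω => ?_) ?_ (ae_of_all _ hsup)
    · exact Real.iSup_nonneg fun x => sq_nonneg _
    · exact (hFint.const_mul _).const_mul _
  have hFle : ∫ ω, F ω ∂ℙ ≤ ((n:ℝ)⁻¹ * EZ2) * ∫ t, a t := by
    rw [hswap]
    calc ∫ t, a t * ∫ ω, g ω t ^ 2 ∂ℙ ≤ ∫ t, a t * ((n:ℝ)⁻¹ * EZ2) := by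
          refine integral_mono_of_nonneg (ae_of_all _ fun t => ?_) (haint.mul_const _)
            (ae_of_all _ fun t => ?_)
          · exact mul_nonneg (han t) (integral_nonneg fun ω => sq_nonneg _)
          · exact mul_le_mul_of_nonneg_left (hvar t) (han t)
      _ = ((n:ℝ)⁻¹ * EZ2) * ∫ t, a t := by rw [integral_mul_const]; ring
  refine le_trans hmain ?_
  have hrhs : ∫ ω, (2 * Real.pi)⁻¹ ^ 2 * ((∫ t, a t) * F ω) ∂ℙ
      = (2 * Real.pi)⁻¹ ^ 2 * ((∫ t, a t) * ∫ ω, F ω ∂ℙ) := by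
    rw [integral_const_mul, integral_const_mul]
  rw [hrhs]
  have hstep : (2 * Real.pi)⁻¹ ^ 2 * ((∫ t, a t) * ∫ ω, F ω ∂ℙ)
      ≤ (2 * Real.pi)⁻¹ ^ 2 * ((∫ t, a t) * (((n:ℝ)⁻¹ * EZ2) * ∫ t, a t)) :=
    mul_le_mul_of_nonneg_left (mul_le_mul_of_nonneg_left hFle hia0) (by positivity)
  refine le_trans hstep (le_of_eq ?_)
  rw [← inv_pow]
  ring
end

section
/- Let p, n be positive integers with κ = p/n ∈ (0,1). Let a, ã, r̂, r̃ > 0 be real numbers and v̂₀ ∈ ℝ with v̂₀ ≠ 0. Define σ̂₀² = κ r̂² / (n v̂₀²), μ̂₀² = a²/n − (1−κ) σ̂₀², σ̃² = κ r̃² / (n (1−κ)²), μ̃² = ã²/n − (1−κ) σ̃², and assume μ̂₀² > 0 and μ̃² > 0. Then σ̂₀²/μ̂₀² < σ̃²/μ̃² if and only if (a/ã) · (|v̂₀|/(1−κ)) · (r̃/r̂) > 1. -/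
/-- Efficiency comparison for the unregularized estimator versus the
least-squares pilot. With `κ = p/n ∈ (0,1)`, `σ̂₀² = κ r̂²/(n v̂₀²)`,
`μ̂₀² = a²/n − (1−κ) σ̂₀²`, `σ̃² = κ r̃²/(n (1−κ)²)`, `μ̃² = ã²/n − (1−κ) σ̃²`
(both `μ̂₀², μ̃² > 0`), one has `σ̂₀²/μ̂₀² < σ̃²/μ̃²` iff
`(a/ã)·(|v̂₀|/(1−κ))·(r̃/r̂) > 1`. -/
theorem stmt_12 (p n : ℕ) (hp : 0 < p) (hn : 0 < n)
    (κ : ℝ) (hκ : κ = (p : ℝ) / n) (hκpos : 0 < κ) (hκlt : κ < 1)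
    (a aTil rHat rTil : ℝ)
    (ha : 0 < a) (haTil : 0 < aTil) (hrHat : 0 < rHat) (hrTil : 0 < rTil)
    (v0 : ℝ) (hv0 : v0 ≠ 0)
    (σHat2 μHat2 σTil2 μTil2 : ℝ)
    (hσHat2 : σHat2 = κ * rHat ^ 2 / (n * v0 ^ 2))
    (hμHat2 : μHat2 = a ^ 2 / n - (1 - κ) * σHat2)
    (hσTil2 : σTil2 = κ * rTil ^ 2 / (n * (1 - κ) ^ 2))
    (hμTil2 : μTil2 = aTil ^ 2 / n - (1 - κ) * σTil2)
    (hμHat2pos : 0 < μHat2) (hμTil2pos : 0 < μTil2) :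
    σHat2 / μHat2 < σTil2 / μTil2 ↔
      1 < (a / aTil) * (|v0| / (1 - κ)) * (rTil / rHat) := by
  have hn' : (0:ℝ) < n := by exact_mod_cast hn
  have h1κ : 0 < 1 - κ := by linarith
  have hv : 0 < |v0| := abs_pos.mpr hv0
  have hv2 : v0 ^ 2 = |v0| ^ 2 := (sq_abs v0).symm
  have hden : (0:ℝ) < (n : ℝ) ^ 2 * v0 ^ 2 * (1 - κ) ^ 2 := by positivity
  have hA : 0 < a * |v0| * rTil := by positivity
  have hB : 0 < aTil * (1 - κ) * rHat := by positivity
  have e : σTil2 * μHat2 - σHat2 * μTil2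
      = κ * ((a * |v0| * rTil) ^ 2 - (aTil * (1 - κ) * rHat) ^ 2)
        / ((n : ℝ) ^ 2 * v0 ^ 2 * (1 - κ) ^ 2) := by
    rw [hμHat2, hμTil2, hσHat2, hσTil2]
    rw [show (a * |v0| * rTil) ^ 2 = a ^ 2 * v0 ^ 2 * rTil ^ 2 by
      rw [hv2]; ring]
    field_simp
    ring
  have step1 : σHat2 / μHat2 < σTil2 / μTil2 ↔
      (aTil * (1 - κ) * rHat) ^ 2 < (a * |v0| * rTil) ^ 2 := by
    rw [div_lt_div_iff₀ hμHat2pos hμTil2pos, ← sub_pos, e, div_pos_iff]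
    constructor
    · rintro (⟨h1, -⟩ | ⟨-, h2⟩)
      · nlinarith
      · linarith
    · intro h
      exact Or.inl ⟨by nlinarith, hden⟩
  have step2 : (aTil * (1 - κ) * rHat) ^ 2 < (a * |v0| * rTil) ^ 2 ↔
      aTil * (1 - κ) * rHat < a * |v0| * rTil :=
    pow_lt_pow_iff_left₀ hB.le hA.le two_ne_zero
  have step3 : (a / aTil) * (|v0| / (1 - κ)) * (rTil / rHat)
      = (a * |v0| * rTil) / (aTil * (1 - κ) * rHat) := by
    field_simp
  rw [step1, step2, step3, lt_div_iff₀ (by positivity), one_mul]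
end
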